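/- Non-existence of an exactly learnable Hamiltonian for forward-Euler HNN training (Appendix A, concrete form): Let h ≠ 0 with cos h ≠ 1, and let Ω ⊆ ℝ² be a nonempty open set. Then there is no C² function Ĥ : Ω → ℝ satisfying, for all (p,q) ∈ Ω, the forward-Euler identities −∂Ĥ/∂q(p,q) = (p·cos h − q·sin h − p)/h and ∂Ĥ/∂p(p,q) = (p·sin h + q·cos h − q)/h, where the right-hand sides are the finite differences (φ_h(p,q) − (p,q))/h of the exact harmonic-oscillator flow. -/

import Mathlib

/-- Non-existence of an exactly learnable Hamiltonian for forward-Euler HNN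
training on harmonic-oscillator flow data.  Phase space is `ℝ × ℝ` with a point `(p, q)`;
`∂/∂p` is the derivative in direction `(1,0)` and `∂/∂q` in direction `(0,1)`. -/
theorem stmt2 (h : ℝ) (hh : h ≠ 0) (hcos : Real.cos h ≠ 1)
    (Ω : Set (ℝ × ℝ)) (hΩ : IsOpen Ω) (hne : Ω.Nonempty) :
    ¬ ∃ H : ℝ × ℝ → ℝ, ContDiffOn ℝ 2 H Ω ∧
      ∀ p q : ℝ, (p, q) ∈ Ω →
        (-(fderiv ℝ H (p, q) (0, 1)) = (p * Real.cos h - q * Real.sin h - p) / h ∧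
          fderiv ℝ H (p, q) (1, 0) = (p * Real.sin h + q * Real.cos h - q) / h) := by
  rintro ⟨H, hH, hEq⟩
  obtain ⟨x₀, hx₀⟩ := hne
  set c := Real.cos h with hc
  set s := Real.sin h with hs
  have hnhds : Ω ∈ nhds x₀ := hΩ.mem_nhds hx₀
  have hCa : ContDiffAt ℝ 2 H x₀ := hH.contDiffAt hnhds
  have hsymm : IsSymmSndFDerivAt ℝ H x₀ := hCa.isSymmSndFDerivAt (by simp [minSmoothness_of_isRCLikeNormedField])
  have hdf : DifferentiableAt ℝ (fderiv ℝ H) x₀ := by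
    have := hCa.fderiv_right (m := 1) (by norm_num)
    exact this.differentiableAt (by norm_num)
  -- derivative of (fun x => fderiv ℝ H x v) at x₀ in direction u equals D² u v
  have key : ∀ u v : ℝ × ℝ,
      fderiv ℝ (fun x => fderiv ℝ H x v) x₀ u = fderiv ℝ (fderiv ℝ H) x₀ u v := by
    intro u v
    have := fderiv_clm_apply (c := fderiv ℝ H) (u := fun _ => v) hdf
      (differentiableAt_const v)
    simp [this]
  -- explicit formulas on Ω
  have hA : (fun x : ℝ × ℝ => fderiv ℝ H x (1, 0)) =ᶠ[nhds x₀]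
      fun x : ℝ × ℝ => (x.1 * s + x.2 * c - x.2) * h⁻¹ := by
    filter_upwards [hnhds] with x hx
    have := (hEq x.1 x.2 (by simpa using hx)).2
    rw [div_eq_mul_inv] at this
    simpa using this
  have hB : (fun x : ℝ × ℝ => fderiv ℝ H x (0, 1)) =ᶠ[nhds x₀]
      fun x : ℝ × ℝ => -((x.1 * c - x.2 * s - x.1) * h⁻¹) := by
    filter_upwards [hnhds] with x hx
    have h1 := (hEq x.1 x.2 (by simpa using hx)).1
    rw [div_eq_mul_inv] at h1
    have h2 : fderiv ℝ H (x.1, x.2) (0, 1) = -((x.1 * c - x.2 * s - x.1) * h⁻¹) := by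
      linarith
    simpa using h2
  -- derivatives of the explicit affine functions
  have hA' : HasFDerivAt (fun x : ℝ × ℝ => (x.1 * s + x.2 * c - x.2) * h⁻¹)
      (h⁻¹ • ((s • (ContinuousLinearMap.fst ℝ ℝ ℝ) + c • (ContinuousLinearMap.snd ℝ ℝ ℝ))
        - (ContinuousLinearMap.snd ℝ ℝ ℝ))) x₀ :=
    (((hasFDerivAt_fst.mul_const s).add (hasFDerivAt_snd.mul_const c)).sub
      hasFDerivAt_snd).mul_const h⁻¹
  have hB' : HasFDerivAt (fun x : ℝ × ℝ => -((x.1 * c - x.2 * s - x.1) * h⁻¹))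
      (-(h⁻¹ • ((c • (ContinuousLinearMap.fst ℝ ℝ ℝ) - s • (ContinuousLinearMap.snd ℝ ℝ ℝ))
        - (ContinuousLinearMap.fst ℝ ℝ ℝ)))) x₀ :=
    ((((hasFDerivAt_fst.mul_const c).sub (hasFDerivAt_snd.mul_const s)).sub
      hasFDerivAt_fst).mul_const h⁻¹).neg
  have e1 : fderiv ℝ (fderiv ℝ H) x₀ (0, 1) (1, 0) = (c - 1) * h⁻¹ := by
    rw [← key, hA.fderiv_eq, hA'.fderiv]
    simp [mul_comm]
  have e2 : fderiv ℝ (fderiv ℝ H) x₀ (1, 0) (0, 1) = -((c - 1) * h⁻¹) := by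
    rw [← key, hB.fderiv_eq, hB'.fderiv]
    simp [mul_comm]
  have := hsymm (1, 0) (0, 1)
  rw [e1, e2] at this
  apply hcos
  have hne' : (c - 1) * h⁻¹ = 0 := by linarith
  have : c - 1 = 0 := by
    rcases mul_eq_zero.1 hne' with h' | h'
    · exact h'
    · exact absurd (inv_eq_zero.1 h') hh
  linarith
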